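/- Let m be a squarefree positive integer, p an odd prime with p ∤ m, and suppose a, b, x, y are integers with p ∤ ab, a² ≡ m b² (mod p), and |x² − m y²| = 4p. Then there exist a choice of sign ε ∈ {±1} and an integer z with 2az ≡ x (mod p) and 2bz ≡ εy (mod p). -/

import Mathlib

theorem exists_sign_and_z (m : ℤ) (hm : Squarefree m) (hmpos : 0 < m)
    (p : ℕ) (hp : p.Prime) (hodd : Odd p) (hpm : ¬ (p : ℤ) ∣ m)
    (a b x y : ℤ) (hab : ¬ (p : ℤ) ∣ (a * b))
    (hcong : (p : ℤ) ∣ (a ^ 2 - m * b ^ 2))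
    (hnorm : |x ^ 2 - m * y ^ 2| = 4 * p) :
    ∃ ε : ℤ, (ε = 1 ∨ ε = -1) ∧ ∃ z : ℤ,
      (p : ℤ) ∣ (2 * a * z - x) ∧ (p : ℤ) ∣ (2 * b * z - ε * y) := by
  haveI : Fact p.Prime := ⟨hp⟩
  have hnx : (p : ℤ) ∣ (x ^ 2 - m * y ^ 2) := by
    have : (p : ℤ) ∣ |x ^ 2 - m * y ^ 2| := hnorm ▸ ⟨4, by ring⟩
    exact (dvd_abs _ _).mp this
  set A : ZMod p := (a : ZMod p) with hAdef
  set B : ZMod p := (b : ZMod p) with hBdef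
  set X : ZMod p := (x : ZMod p) with hXdef
  set Y : ZMod p := (y : ZMod p) with hYdef
  set M : ZMod p := (m : ZMod p) with hMdef
  have hAB : A * B ≠ 0 := by
    intro h
    apply hab
    have : ((a * b : ℤ) : ZMod p) = 0 := by push_cast; exact h
    exact (ZMod.intCast_zmod_eq_zero_iff_dvd _ _).mp this
  have hA : A ≠ 0 := fun h => hAB (by rw [h, zero_mul])
  have hB : B ≠ 0 := fun h => hAB (by rw [h, mul_zero])
  have h2 : (2 : ZMod p) ≠ 0 := by
    intro h
    have : (p : ℤ) ∣ 2 := by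
      have : ((2 : ℤ) : ZMod p) = 0 := by push_cast; exact h
      exact (ZMod.intCast_zmod_eq_zero_iff_dvd _ _).mp this
    have hp2 : p ∣ 2 := by exact_mod_cast this
    have := (Nat.prime_dvd_prime_iff_eq hp Nat.prime_two).mp hp2
    rw [this] at hodd
    exact (Nat.not_odd_iff_even.mpr (by decide)) hodd
  have h2A : (2 : ZMod p) * A ≠ 0 := mul_ne_zero h2 hA
  have hcong' : A ^ 2 = M * B ^ 2 := by
    have : ((a ^ 2 - m * b ^ 2 : ℤ) : ZMod p) = 0 :=
      (ZMod.intCast_zmod_eq_zero_iff_dvd _ _).mpr hcong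
    push_cast at this
    linear_combination this
  have hnx' : X ^ 2 = M * Y ^ 2 := by
    have : ((x ^ 2 - m * y ^ 2 : ℤ) : ZMod p) = 0 :=
      (ZMod.intCast_zmod_eq_zero_iff_dvd _ _).mpr hnx
    push_cast at this
    linear_combination this
  have hkey : (B * X - A * Y) * (B * X + A * Y) = 0 := by
    have h : B ^ 2 * X ^ 2 = A ^ 2 * Y ^ 2 := by
      rw [hnx', hcong']; ring
    linear_combination h
  set z0 : ZMod p := X * ((2 : ZMod p) * A)⁻¹ with hz0
  have hz0A : 2 * A * z0 = X := by
    rw [hz0]; field_simp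
  have hzcast : (((z0.val : ℤ)) : ZMod p) = z0 := by
    push_cast
    simp [ZMod.natCast_val, ZMod.cast_id]
  have hfirst : (p : ℤ) ∣ (2 * a * (z0.val : ℤ) - x) := by
    apply (ZMod.intCast_zmod_eq_zero_iff_dvd _ _).mp
    push_cast [hzcast]
    rw [← hAdef, ← hXdef]
    linear_combination hz0A
  rcases mul_eq_zero.mp hkey with hc | hc
  · refine ⟨1, Or.inl rfl, (z0.val : ℤ), hfirst, ?_⟩
    apply (ZMod.intCast_zmod_eq_zero_iff_dvd _ _).mp
    push_cast [hzcast]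
    rw [← hBdef, ← hYdef]
    have h2B : 2 * B * z0 = Y := by
      rw [hz0]
      field_simp
      linear_combination (sub_eq_zero.mp hc)
    rw [one_mul]
    linear_combination h2B
  · refine ⟨-1, Or.inr rfl, (z0.val : ℤ), hfirst, ?_⟩
    apply (ZMod.intCast_zmod_eq_zero_iff_dvd _ _).mp
    push_cast [hzcast]
    rw [← hBdef, ← hYdef]
    have h2B : 2 * B * z0 = -Y := by
      rw [hz0]
      field_simp
      linear_combination hc
    linear_combination h2B
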